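/- Run the discounted OCP algorithm A_CP with hyperparameter ε > 0 and discount factors λ_t ∈ (0,∞) (λ_0 := 1): initialize S*_{0,clip} = 0, V*_{0,clip} = 0, G*_0 = 0; in round t, if G*_{t-1} = 0 set r̃_t = 0, otherwise set r̃_t = ε·erfi( S*_{t-1,clip} / (2√(V*_{t-1,clip} + 2G*_{t-1}S*_{t-1,clip} + 16(G*_{t-1})²)) ) − ε·G*_{t-1}/√(V*_{t-1,clip} + 2G*_{t-1}S*_{t-1,clip} + 16(G*_{t-1})²) · exp( (S*_{t-1,clip})² / (4(V*_{t-1,clip} + 2G*_{t-1}S*_{t-1,clip} + 16(G*_{t-1})²)) ), where erfi(x) := ∫₀ˣ exp(u²) du; predict r_t = max(r̃_t, 0); receive g*_t ∈ ∂f*_t(r_t), where f*_t is convex on [0,∞), minimized at r*_t ∈ [0,∞), and g*_t ≤ 0 whenever r_t = r*_t; set g*_{t,clip} = the projection of g*_t onto [−λ_{t-1}G*_{t-1}, λ_{t-1}G*_{t-1}], S*_{t,clip} = λ_{t-1}·S*_{t-1,clip} − g*_{t,clip}, V*_{t,clip} = λ_{t-1}²·V*_{t-1,clip} + (g*_{t,clip})²,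 G*_t = max(λ_{t-1}·G*_{t-1}, |g*_t|). Then for all t ∈ ℕ_+: |S*_{t,clip}| ≤ 2·√(V*_{t,clip})·(1 + √(log(1 + 2r_{t+1}·ε^{-1}))) + 13·G*_t·(1 + √(log(1 + 2r_{t+1}·ε^{-1})))². -/

import Mathlib

open scoped BigOperators

set_option maxHeartbeats 1000000

/-- The (rescaled) imaginary error function `erfi(x) = ∫₀ˣ exp(u²) du`. -/
noncomputable def erfi (x : ℝ) : ℝ := ∫ u in (0:ℝ)..x, Real.exp (u^2)

lemma erfi_nonpos {x : ℝ} (hx : x ≤ 0) : erfi x ≤ 0 := by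
  have h : 0 ≤ ∫ u in x..(0:ℝ), Real.exp (u^2) :=
    intervalIntegral.integral_nonneg hx (fun u _ => (Real.exp_pos _).le)
  have h2 : erfi x = -∫ u in x..(0:ℝ), Real.exp (u^2) := by
    rw [erfi, intervalIntegral.integral_symm]
  rw [h2]; linarith

lemma erfi_lower {x : ℝ} (hx : 0 < x) :
    (Real.exp (x^2) - 1) / (2*x) ≤ erfi x := by
  have hc : Continuous fun u : ℝ => Real.exp (u^2) := by continuity
  have hc2 : Continuous fun u : ℝ => u * Real.exp (u^2) := by continuity
  have hint : ∫ u in (0:ℝ)..x, u * Real.exp (u^2) = (Real.exp (x^2) - 1) / 2 := by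
    have hderiv : ∀ u ∈ Set.uIcc (0:ℝ) x,
        HasDerivAt (fun v => Real.exp (v^2) / 2) (u * Real.exp (u^2)) u := by
      intro u _
      have h1 : HasDerivAt (fun v : ℝ => v^2) (2*u) u := by
        simpa using hasDerivAt_pow 2 u
      have h3 := (h1.exp).div_const 2
      exact h3.congr_deriv (by ring)
    rw [intervalIntegral.integral_eq_sub_of_hasDerivAt hderiv (hc2.intervalIntegrable _ _)]
    simp [Real.exp_zero]
    ring
  have hmono : ∫ u in (0:ℝ)..x, u * Real.exp (u^2) ≤ ∫ u in (0:ℝ)..x, x * Real.exp (u^2) := by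
    apply intervalIntegral.integral_mono_on hx.le (hc2.intervalIntegrable _ _)
      ((continuous_const.mul hc).intervalIntegrable _ _)
    intro u hu
    exact mul_le_mul_of_nonneg_right hu.2 (Real.exp_pos _).le
  rw [intervalIntegral.integral_const_mul, hint] at hmono
  rw [erfi, div_le_iff₀ (by positivity : (0:ℝ) < 2*x)]
  nlinarith [hmono]


/-- For the discounted OCP algorithm `A_CP`, the discounted clipped gradient
sum is controlled by the prediction magnitude:
`|S*_{t,clip}| ≤ 2√(V*_{t,clip})(1+√log(1+2r_{t+1}/ε)) + 13·G*_t·(1+√log(1+2r_{t+1}/ε))²`. -/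
theorem ocp_clipped_sum_bound
    (eps : ℝ) (heps : 0 < eps)
    (lam : ℕ → ℝ) (hlam : ∀ t, 0 < lam t) (hlam0 : lam 0 = 1)
    (f : ℕ → ℝ → ℝ) (rstar : ℕ → ℝ)
    (Sc Vc Gs rt r gs gclip : ℕ → ℝ)
    (hSc0 : Sc 0 = 0) (hVc0 : Vc 0 = 0) (hGs0 : Gs 0 = 0)
    (hrt : ∀ t, 1 ≤ t →
      (Gs (t-1) = 0 → rt t = 0) ∧
      (Gs (t-1) ≠ 0 → rt t =
        eps * erfi (Sc (t-1) /
          (2 * Real.sqrt (Vc (t-1) + 2 * Gs (t-1) * Sc (t-1) + 16 * (Gs (t-1))^2)))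
        - eps * Gs (t-1) / Real.sqrt (Vc (t-1) + 2 * Gs (t-1) * Sc (t-1) + 16 * (Gs (t-1))^2)
          * Real.exp ((Sc (t-1))^2 /
            (4 * (Vc (t-1) + 2 * Gs (t-1) * Sc (t-1) + 16 * (Gs (t-1))^2)))))
    (hr : ∀ t, 1 ≤ t → r t = max (rt t) 0)
    (hfconv : ∀ t, ConvexOn ℝ (Set.Ici 0) (f t))
    (hrstar : ∀ t, 0 ≤ rstar t)
    (hmin : ∀ t, ∀ y ∈ Set.Ici (0:ℝ), f t (rstar t) ≤ f t y)
    (hsub : ∀ t, 1 ≤ t → ∀ y ∈ Set.Ici (0:ℝ), f t (r t) + gs t * (y - r t) ≤ f t y)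
    (hneg : ∀ t, 1 ≤ t → r t = rstar t → gs t ≤ 0)
    (hclip : ∀ t, 1 ≤ t →
      gclip t = max (-(lam (t-1) * Gs (t-1))) (min (gs t) (lam (t-1) * Gs (t-1))))
    (hScrec : ∀ t, 1 ≤ t → Sc t = lam (t-1) * Sc (t-1) - gclip t)
    (hVcrec : ∀ t, 1 ≤ t → Vc t = (lam (t-1))^2 * Vc (t-1) + (gclip t)^2)
    (hGsrec : ∀ t, 1 ≤ t → Gs t = max (lam (t-1) * Gs (t-1)) |gs t|) :
    ∀ t, 1 ≤ t →
      |Sc t| ≤ 2 * Real.sqrt (Vc t)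
          * (1 + Real.sqrt (Real.log (1 + 2 * r (t+1) * eps⁻¹)))
        + 13 * Gs t * (1 + Real.sqrt (Real.log (1 + 2 * r (t+1) * eps⁻¹)))^2 := by
  -- nonnegativity of Gs
  have hGnn : ∀ s, 0 ≤ Gs s := by
    intro s
    cases s with
    | zero => simp [hGs0]
    | succ n =>
      have h := hGsrec (n+1) (by omega)
      simp only [Nat.add_sub_cancel] at h
      rw [h]
      exact le_max_of_le_right (abs_nonneg _)
  -- nonnegativity of Vc
  have hVnn : ∀ s, 0 ≤ Vc s := by
    intro s
    induction s with
    | zero => simp [hVc0]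
    | succ n ih =>
      have h := hVcrec (n+1) (by omega)
      simp only [Nat.add_sub_cancel] at h
      rw [h]
      linarith [mul_nonneg (sq_nonneg (lam n)) ih, sq_nonneg (gclip (n+1))]
  -- clipping bounds
  have hgclip_ub : ∀ s, 1 ≤ s → gclip s ≤ lam (s-1) * Gs (s-1) := by
    intro s hs
    rw [hclip s hs]
    have ha : 0 ≤ lam (s-1) * Gs (s-1) := mul_nonneg (hlam _).le (hGnn _)
    exact max_le (by linarith) (min_le_right _ _)
  have hgclip_lb : ∀ s, 1 ≤ s → -(lam (s-1) * Gs (s-1)) ≤ gclip s := by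
    intro s hs
    rw [hclip s hs]
    exact le_max_left _ _
  have hGstep : ∀ n, lam n * Gs n ≤ Gs (n+1) := by
    intro n
    have h := hGsrec (n+1) (by omega)
    simp only [Nat.add_sub_cancel] at h
    rw [h]
    exact le_max_left _ _
  -- Gs = 0 implies Sc = 0
  have hG0S0 : ∀ s, Gs s = 0 → Sc s = 0 := by
    intro s
    induction s with
    | zero => intro _; exact hSc0
    | succ n ih =>
      intro h
      have hGn : Gs n = 0 := by
        by_contra hc
        have hGp : 0 < Gs n := lt_of_le_of_ne (hGnn n) (Ne.symm hc)
        nlinarith [hGstep n, mul_pos (hlam n) hGp]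
      have hS := hScrec (n+1) (by omega)
      simp only [Nat.add_sub_cancel] at hS
      have hub := hgclip_ub (n+1) (by omega)
      have hlb := hgclip_lb (n+1) (by omega)
      simp only [Nat.add_sub_cancel] at hub hlb
      rw [hGn, mul_zero] at hub hlb
      have hg0 : gclip (n+1) = 0 := le_antisymm hub (by simpa using hlb)
      rw [hS, ih hGn, hg0]
      ring
  -- if prediction is 0, gradient is nonpositive
  have hgs_nonpos : ∀ s, 1 ≤ s → r s = 0 → gs s ≤ 0 := by
    intro s hs hr0
    rcases eq_or_lt_of_le (hrstar s) with he | hlt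
    · exact hneg s hs (by rw [hr0, ← he])
    · have h1 := hsub s hs (rstar s) (hrstar s)
      have h2 := hmin s (r s) (by rw [Set.mem_Ici, hr0])
      rw [hr0] at h1 h2
      nlinarith [h1, h2, hlt]
  -- lower bound on Sc
  have hSlb : ∀ s, -(Gs s) ≤ Sc s := by
    intro s
    induction s with
    | zero => simp [hSc0, hGs0]
    | succ n ih =>
      have hS := hScrec (n+1) (by omega)
      simp only [Nat.add_sub_cancel] at hS
      have hub := hgclip_ub (n+1) (by omega)
      have hlb := hgclip_lb (n+1) (by omega)
      simp only [Nat.add_sub_cancel] at hub hlb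
      have hGst := hGstep n
      rcases le_or_gt 0 (Sc n) with hpos | hneg'
      · rw [hS]
        linarith [mul_nonneg (hlam n).le hpos]
      · -- Sc n < 0 : show r (n+1) = 0
        have hr0 : r (n+1) = 0 := by
          have hrr := hr (n+1) (by omega)
          have hrtle : rt (n+1) ≤ 0 := by
            rcases eq_or_ne (Gs n) 0 with hG0 | hG0
            · have hz := (hrt (n+1) (by omega)).1 (by simpa using hG0)
              linarith
            · have hGpos : 0 < Gs n := lt_of_le_of_ne (hGnn n) (Ne.symm hG0)
              have hval := (hrt (n+1) (by omega)).2 (by simpa using hG0)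
              simp only [Nat.add_sub_cancel] at hval
              have hDpos : 0 < Vc n + 2*Gs n*Sc n + 16*(Gs n)^2 := by
                have hm := mul_le_mul_of_nonneg_left ih (by linarith : (0:ℝ) ≤ 2*Gs n)
                have := mul_pos hGpos hGpos
                nlinarith [hVnn n]
              have hdpos : 0 < Real.sqrt (Vc n + 2*Gs n*Sc n + 16*(Gs n)^2) :=
                Real.sqrt_pos.2 hDpos
              have harg : Sc n / (2 * Real.sqrt (Vc n + 2*Gs n*Sc n + 16*(Gs n)^2)) ≤ 0 :=
                div_nonpos_of_nonpos_of_nonneg hneg'.le (by positivity)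
              have herfi := erfi_nonpos harg
              have hterm : 0 < eps * Gs n / Real.sqrt (Vc n + 2*Gs n*Sc n + 16*(Gs n)^2)
                  * Real.exp ((Sc n)^2 / (4 * (Vc n + 2*Gs n*Sc n + 16*(Gs n)^2))) :=
                mul_pos (div_pos (mul_pos heps hGpos) hdpos) (Real.exp_pos _)
              have he1 : eps * erfi (Sc n / (2 * Real.sqrt (Vc n + 2*Gs n*Sc n + 16*(Gs n)^2))) ≤ 0 :=
                mul_nonpos_of_nonneg_of_nonpos heps.le herfi
              rw [hval]
              linarith
          rw [hrr]
          exact max_eq_right hrtle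
        have hgle := hgs_nonpos (n+1) (by omega) hr0
        have hgc : gclip (n+1) ≤ 0 := by
          rw [hclip (n+1) (by omega)]
          simp only [Nat.add_sub_cancel]
          exact max_le (by linarith [mul_nonneg (hlam n).le (hGnn n)])
            (le_trans (min_le_left _ _) hgle)
        rw [hS]
        have hmul : lam n * (-(Gs n)) ≤ lam n * Sc n :=
          mul_le_mul_of_nonneg_left ih (hlam n).le
        nlinarith [hGst, hgc, hmul]
  -- MAIN ARGUMENT
  intro t ht
  have hrt1 := hr (t+1) (by omega)
  have hrnn : 0 ≤ r (t+1) := by rw [hrt1]; exact le_max_right _ _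
  have hrpos : (0:ℝ) < 1 + 2 * r (t+1) * eps⁻¹ := by
    have hmn := mul_nonneg (mul_nonneg (by norm_num : (0:ℝ) ≤ 2) hrnn) (inv_nonneg.2 heps.le)
    linarith only [hmn]
  set L := Real.log (1 + 2 * r (t+1) * eps⁻¹) with hLdef
  have hL0 : 0 ≤ L := Real.log_nonneg (by
    have hmn := mul_nonneg (mul_nonneg (by norm_num : (0:ℝ) ≤ 2) hrnn) (inv_nonneg.2 heps.le)
    linarith only [hmn])
  set u := Real.sqrt L with hudef
  have hu0 : 0 ≤ u := Real.sqrt_nonneg _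
  have huL : u^2 = L := Real.sq_sqrt hL0
  clear_value L u
  set w := Real.sqrt (Vc t) with hwdef
  have hw0 : 0 ≤ w := Real.sqrt_nonneg _
  have hwV : w^2 = Vc t := Real.sq_sqrt (hVnn t)
  clear_value w
  rcases eq_or_lt_of_le (hGnn t) with hG0 | hGpos
  · rw [hG0S0 t hG0.symm, ← hG0]
    simp only [abs_zero, mul_zero, zero_mul, add_zero]
    nlinarith only [mul_nonneg hw0 hu0, hw0]
  rcases le_or_gt (Sc t) 0 with hSle | hSpos
  · rw [abs_of_nonpos hSle]
    have k1 : 0 ≤ w * u := mul_nonneg hw0 hu0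
    have k2 : 0 ≤ Gs t * u := mul_nonneg hGpos.le hu0
    have k3 : 0 ≤ Gs t * u^2 := mul_nonneg hGpos.le (sq_nonneg u)
    linarith only [hSlb t, k1, k2, k3, hw0, hGpos.le]
  · rw [abs_of_pos hSpos]
    have hGne : Gs ((t+1)-1) ≠ 0 := by
      simp only [Nat.add_sub_cancel]
      exact hGpos.ne'
    have hval := (hrt (t+1) (by omega)).2 hGne
    simp only [Nat.add_sub_cancel] at hval
    set S := Sc t with hSdef
    set V := Vc t with hVdef
    set G := Gs t with hGdef
    clear_value S V G
    set D := V + 2 * G * S + 16 * G ^ 2 with hDd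
    have hDpos : 0 < D := by
      rw [hDd]
      linarith only [hwV, sq_nonneg w, mul_pos hGpos hSpos, mul_pos hGpos hGpos]
    clear_value D
    set d := Real.sqrt D with hddef
    have hd0 : 0 < d := Real.sqrt_pos.2 hDpos
    have hd2 : d^2 = D := Real.sq_sqrt hDpos.le
    clear_value d
    set x := S / (2 * d) with hxdef
    have hx0 : 0 < x := by
      rw [hxdef]
      exact div_pos hSpos (by linarith only [hd0])
    have hdne : d ≠ 0 := hd0.ne'
    have hxne : x ≠ 0 := hx0.ne'
    have hSx : S = 2*d*x := by
      rw [hxdef]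
      field_simp
    have hxsq : S^2 / (4 * D) = x^2 := by
      rw [hxdef, div_pow, ← hd2]
      congr 1
      ring
    clear_value x
    rw [hxsq] at hval
    set E := Real.exp (x^2) with hEdef
    have hE0 : 0 < E := Real.exp_pos _
    clear_value E
    have hrge : rt (t+1) ≤ r (t+1) := by rw [hrt1]; exact le_max_left _ _
    have hexpL : Real.exp L = 1 + 2*r (t+1)*eps⁻¹ := by
      rw [hLdef]
      exact Real.exp_log hrpos
    have herfi := erfi_lower hx0
    rw [← hEdef] at herfi
    have h4 : eps * ((E-1)/(2*x) - G/d*E) ≤ r (t+1) := by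
      have h2 : eps * ((E-1)/(2*x)) ≤ eps * erfi x := mul_le_mul_of_nonneg_left herfi heps.le
      have h3 : eps * ((E-1)/(2*x) - G/d*E) = eps*((E-1)/(2*x)) - eps*G/d*E := by ring
      rw [hval] at hrge
      rw [h3]
      linarith only [h2, hrge]
    have h5 : (E-1)/(2*x) - G/d*E ≤ r (t+1) * eps⁻¹ := by
      rw [← div_eq_mul_inv, le_div_iff₀ heps]
      linarith only [h4]
    have h7 : 2*S*G ≤ d^2 := by
      rw [hd2, hDd]
      linarith only [hwV, sq_nonneg w, sq_nonneg G]
    have hP2 : 2*x - 2 + E ≤ 2*x*Real.exp L := by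
      have h8 : 4*x*(G/d*E) ≤ E := by
        have h9 : 4*x*(G/d*E) = 2*S*G*E/d^2 := by
          rw [hxdef]
          field_simp
          ring
        rw [h9, div_le_iff₀ (pow_pos hd0 2)]
        nlinarith only [h7, hE0]
      have h10 : 4*x*((E-1)/(2*x)) = 2*(E-1) := by
        field_simp
        ring
      have h11 := mul_le_mul_of_nonneg_left h5 (by linarith only [hx0] : (0:ℝ) ≤ 4*x)
      have h12 : 4*x*((E-1)/(2*x) - G/d*E) = 2*(E-1) - 4*x*(G/d*E) := by
        rw [mul_sub, h10]
      rw [hexpL]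
      linarith only [h11, h12, h8]
    have hS2 : S^2 = 4*x^2*(w^2 + 2*G*S + 16*G^2) := by
      calc S^2 = 4*x^2*d^2 := by rw [hSx]; ring
        _ = 4*x^2*D := by rw [hd2]
        _ = 4*x^2*(w^2 + 2*G*S + 16*G^2) := by rw [hDd, ← hwV]
    rcases le_or_gt x 1 with hx1 | hx1
    · -- small x case : S ≤ 2w + 13G
      have hx2sq : x^2 ≤ 1 := by nlinarith only [hx0.le, hx1]
      have hb : S ≤ 2*w + 13*G := by
        by_contra hcon
        push_neg at hcon
        have hp1 : 0 < S + 2*w + 5*G := by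
          linarith only [hSpos, hw0, hGpos]
        have hp2 : 0 < (S - (2*w+13*G)) * (S + 2*w + 5*G) :=
          mul_pos (by linarith only [hcon]) hp1
        have t1 : 0 ≤ (1 - x^2) * w^2 := mul_nonneg (by linarith only [hx2sq]) (sq_nonneg w)
        have t2 : 0 ≤ (1 - x^2) * (G*S) := mul_nonneg (by linarith only [hx2sq]) (mul_pos hGpos hSpos).le
        have t3 : 0 ≤ (1 - x^2) * G^2 := mul_nonneg (by linarith only [hx2sq]) (sq_nonneg G)
        have hle : S^2 - 8*G*S ≤ 4*w^2 + 64*G^2 := by linarith only [hS2, t1, t2, t3]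
        linarith only [hp2, hle, mul_nonneg hw0 hGpos.le, mul_pos hGpos hGpos]
      have k1 : 0 ≤ w * u := mul_nonneg hw0 hu0
      have k2 : 0 ≤ G * u := mul_nonneg hGpos.le hu0
      have k3 : 0 ≤ G * u^2 := mul_nonneg hGpos.le (sq_nonneg u)
      linarith only [hb, k1, k2, k3]
    · -- large x case
      have hEle : E ≤ 2*x*Real.exp L := by linarith only [hP2, hx1]
      have hlog2 : Real.log 2 < 0.6931471808 := Real.log_two_lt_d9
      have hK : x^2 ≤ L + Real.log 2 + x - 1 := by
        have hlogE : Real.log E = x^2 := by rw [hEdef, Real.log_exp]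
        have h13 : Real.log E ≤ Real.log (2*x*Real.exp L) :=
          Real.log_le_log hE0 hEle
        rw [Real.log_mul (ne_of_gt (by linarith only [hx0] : (0:ℝ) < 2*x)) (Real.exp_ne_zero _),
          Real.log_mul (by norm_num : (2:ℝ) ≠ 0) hxne,
          Real.log_exp, hlogE] at h13
        have hlx : Real.log x ≤ x - 1 := Real.log_le_sub_one_of_pos hx0
        linarith only [h13, hlx]
      have hxu : x ≤ 1 + u := by
        have hsq : (x-1)^2 ≤ L := by linarith only [hK, hlog2, hx1]
        have h14 : x - 1 ≤ u := by
          calc x - 1 = Real.sqrt ((x-1)^2) := (Real.sqrt_sq (by linarith only [hx1])).symm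
            _ ≤ u := by rw [hudef]; exact Real.sqrt_le_sqrt hsq
        linarith only [h14]
      have hu55 : (0.55:ℝ) ≤ u := by
        have hxx : 0 ≤ x * (x-1) := mul_nonneg (by linarith only [hx1]) (by linarith only [hx1])
        have hLlb : 1 - Real.log 2 ≤ L := by linarith only [hK, hxx]
        nlinarith only [huL, hu0, hlog2, hLlb]
      have hq : S ≤ 2*x*w + 8*x^2*G + 8*x*G := by
        by_contra hcon
        push_neg at hcon
        have hp1 : 0 < S + 2*x*w + 8*x*G := by
          linarith only [hSpos, mul_nonneg hx0.le hw0, mul_pos hx0 hGpos]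
        have hp2 : 0 < (S - (2*x*w + 8*x^2*G + 8*x*G)) * (S + 2*x*w + 8*x*G) :=
          mul_pos (by linarith only [hcon]) hp1
        have hfac : (S - (2*x*w + 8*x^2*G + 8*x*G)) * (S + 2*x*w + 8*x*G)
            = -(32*x^2*w*G + 16*x^3*w*G + 64*x^3*G^2) := by
          linear_combination hS2
        rw [hfac] at hp2
        have n1 : 0 ≤ 32*x^2*w*G :=
          mul_nonneg (mul_nonneg (mul_nonneg (by norm_num) (sq_nonneg x)) hw0) hGpos.le
        have n2 : 0 ≤ 16*x^3*w*G :=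
          mul_nonneg (mul_nonneg (mul_nonneg (by norm_num) (pow_nonneg hx0.le 3)) hw0) hGpos.le
        have n3 : 0 ≤ 64*x^3*G^2 :=
          mul_nonneg (mul_nonneg (by norm_num) (pow_nonneg hx0.le 3)) (sq_nonneg G)
        linarith only [hp2, n1, n2, n3]
      have hB : 8*x^2 + 8*x ≤ 13*(1+u)^2 := by
        linarith only [hK, hxu, huL, hu55, hlog2.le, sq_nonneg u]
      have hA : 2*x*w ≤ 2*w*(1+u) := by
        have h := mul_nonneg hw0 (by linarith only [hxu] : (0:ℝ) ≤ 1 + u - x)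
        linarith only [h]
      have hC := mul_le_mul_of_nonneg_right hB hGpos.le
      linarith only [hq, hA, hC]
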